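/- arXiv:0904.4005 — 2 statements merged into one kernel-verified Lean document; each statement's English description precedes it below -/
import Mathlib

section
/- Fix a prime q and unramified Satake parameters α, β ∈ ℂ^× with αβ = 1 (trivial central character). Define β_k = q^{k/2}(α^{k+1} − β^{k+1})/(α − β) for k ≥ 0 and β_k = 0 for k < 0. Then for complex s with |q^{-6s-2}| max(|α|²,|β|²) < 1, the series Σ_{n≥0} q^{-6n(s+1/2)}(β_{2n} − β_{2n−2}) converges and equals (1 − q^{-6s-3})(1 + q^{-6s-2}) / ((1 − α²q^{-6s-2})(1 − β²q^{-6s-2})). -/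
open Complex

noncomputable section

/-- The GL(2) Hecke eigenvalue `β_k = q^{k/2}(α^{k+1} − β^{k+1})/(α − β)`
for `k ≥ 0`, and `β_k = 0` for `k < 0`. -/
def bcoef (q : ℕ) (α β : ℂ) (k : ℤ) : ℂ :=
  if k < 0 then 0
  else (Real.sqrt q : ℂ) ^ k.toNat * (α ^ (k.toNat + 1) - β ^ (k.toNat + 1)) / (α - β)

lemma bcoef_even (q : ℕ) (α β : ℂ) (n : ℕ) :
    bcoef q α β (2 * n) = (q : ℂ) ^ n * (α ^ (2 * n + 1) - β ^ (2 * n + 1)) / (α - β) := by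
  have h0 : ¬ ((2 : ℤ) * n < 0) := by omega
  have ht : ((2 : ℤ) * n).toNat = 2 * n := by omega
  have hs : ((Real.sqrt q : ℂ)) ^ (2 * n) = (q : ℂ) ^ n := by
    rw [pow_mul]
    congr 1
    rw [← Complex.ofReal_pow, Real.sq_sqrt (by positivity)]
    norm_num
  simp [bcoef, h0, ht, hs]

/-- The inert-case generating function identity:
`Σ_{n≥0} t^n (β_{2n} − β_{2n−2}) = (1−t)(1+tq)/((1−α²tq)(1−β²tq))`
under `αβ = 1`, `α ≠ β`, and the convergence hypothesis
`|tq|·max(|α|²,|β|²) < 1`. -/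
theorem inert_generating_function (q : ℕ) (hq : 2 ≤ q) (α β : ℂ)
    (hαβ : α * β = 1) (hne : α ≠ β) (t : ℂ)
    (hconv : ‖t * q‖ * max (‖α‖ ^ 2) (‖β‖ ^ 2) < 1) :
    HasSum (fun n : ℕ => t ^ n * (bcoef q α β (2 * n) - bcoef q α β (2 * n - 2)))
      ((1 - t) * (1 + t * q) / ((1 - α ^ 2 * t * q) * (1 - β ^ 2 * t * q))) := by
  have hαβne : α - β ≠ 0 := sub_ne_zero.mpr hne
  set x : ℂ := α ^ 2 * t * q with hxdef
  set y : ℂ := β ^ 2 * t * q with hydef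
  have hx : ‖x‖ < 1 := by
    calc ‖x‖ = ‖t * q‖ * ‖α‖ ^ 2 := by
          rw [hxdef]; simp only [norm_mul, norm_pow]; ring
      _ ≤ ‖t * q‖ * max (‖α‖ ^ 2) (‖β‖ ^ 2) := by
          gcongr; exact le_max_left _ _
      _ < 1 := hconv
  have hy : ‖y‖ < 1 := by
    calc ‖y‖ = ‖t * q‖ * ‖β‖ ^ 2 := by
          rw [hydef]; simp only [norm_mul, norm_pow]; ring
      _ ≤ ‖t * q‖ * max (‖α‖ ^ 2) (‖β‖ ^ 2) := by
          gcongr; exact le_max_right _ _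
      _ < 1 := hconv
  have hx1 : (1 : ℂ) - x ≠ 0 := by
    intro h
    have : x = 1 := by linear_combination -h
    rw [this] at hx; simp at hx
  have hy1 : (1 : ℂ) - y ≠ 0 := by
    intro h
    have : y = 1 := by linear_combination -h
    rw [this] at hy; simp at hy
  have h1 : HasSum (fun n : ℕ => x ^ n) (1 - x)⁻¹ := hasSum_geometric_of_norm_lt_one hx
  have h2 : HasSum (fun n : ℕ => y ^ n) (1 - y)⁻¹ := hasSum_geometric_of_norm_lt_one hy
  set A : ℂ := α / (α - β) * (1 - x)⁻¹ - β / (α - β) * (1 - y)⁻¹ with hAdef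
  set g : ℕ → ℂ := fun n => α / (α - β) * x ^ n - β / (α - β) * y ^ n with hgdef
  have hg : HasSum g A := (h1.mul_left _).sub (h2.mul_left _)
  set h : ℕ → ℂ := fun n => if n = 0 then 0 else t * g (n - 1) with hhdef
  have hh1 : HasSum (fun n : ℕ => h (n + 1)) (t * A) := by
    simpa [hhdef] using hg.mul_left t
  have hh : HasSum h (t * A) := by
    have := (hasSum_nat_add_iff (f := h) 1).mp hh1
    simpa [hhdef] using this
  have hfinal : HasSum (fun n => g n - h n) (A - t * A) := hg.sub hh
  convert hfinal using 1
  · funext n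
    cases n with
    | zero =>
        have hb0 : bcoef q α β 0 = 1 := by
          have h0 := bcoef_even q α β 0
          norm_num at h0
          rw [h0, div_self hαβne]
        have hbneg : bcoef q α β (-2) = 0 := by simp [bcoef]
        have hgh0 : g 0 - h 0 = 1 := by
          simp only [hgdef, hhdef, pow_zero, mul_one, if_pos rfl, sub_zero]
          rw [div_sub_div_same, div_self hαβne]
        rw [hgh0]
        norm_num [hb0, hbneg]
    | succ m =>
        have hb1 := bcoef_even q α β (m + 1)
        have hb2 := bcoef_even q α β m
        have e2 : (2 : ℤ) * ((m + 1 : ℕ) : ℤ) - 2 = 2 * ((m : ℕ) : ℤ) := by push_cast; ring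
        simp only [hgdef, hhdef, Nat.succ_ne_zero, if_false, Nat.add_sub_cancel]
        rw [e2, hb1, hb2, hxdef, hydef]
        field_simp
        ring
  · have key : α * (1 - y) - β * (1 - x) = (α - β) * (1 + t * (q:ℂ)) := by
      rw [hxdef, hydef]
      linear_combination t * (q:ℂ) * (α - β) * hαβ
    have expand : A - t * A
        = (1 - t) * (α * (1 - y) - β * (1 - x)) / ((α - β) * ((1 - x) * (1 - y))) := by
      rw [hAdef]; field_simp
    rw [expand, key]
    rw [show (1 - t) * ((α - β) * (1 + t * (q:ℂ))) = (α - β) * ((1 - t) * (1 + t * (q:ℂ)))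
      from by ring]
    rw [mul_div_mul_left _ _ hαβne]

end
end

section
/- The map u: H̃₂ × H̃₁ → H̃₃ given by u(Z₁, Z₂) = block-diag(Z₁, −Z̄₂) is well-defined (i.e. if i(Z̄₁−Z₁) and i(Z̄₂−Z₂) are positive definite, then so is i applied to the conjugate-difference of block-diag(Z₁,−Z̄₂)), and satisfies: if g₁ ∈ U(2,2)(ℝ), g₂ ∈ U(1,1)(ℝ) with g₁(iI₂) = Z₁ and g₂(i) = Z₂, then ι(g₁,g₂)(iI₃) = u(Z₁, Z₂). -/
open Matrix Complex
open scoped ComplexOrder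

noncomputable section

abbrev ρ := Fin 2 ⊕ Fin 1

/-- The embedding ι of display (3.1). -/
def iota (g : Matrix (Fin 2 ⊕ Fin 2) (Fin 2 ⊕ Fin 2) ℂ)
    (h : Matrix (Fin 1 ⊕ Fin 1) (Fin 1 ⊕ Fin 1) ℂ) :
    Matrix (ρ ⊕ ρ) (ρ ⊕ ρ) ℂ :=
  fromBlocks
    (fromBlocks g.toBlocks₁₁ 0 0 h.toBlocks₁₁)
    (fromBlocks g.toBlocks₁₂ 0 0 (-h.toBlocks₁₂))
    (fromBlocks g.toBlocks₂₁ 0 0 (-h.toBlocks₂₁))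
    (fromBlocks g.toBlocks₂₂ 0 0 h.toBlocks₂₂)

/-- Fractional linear action. -/
def act {m : Type*} [Fintype m] [DecidableEq m]
    (M : Matrix (m ⊕ m) (m ⊕ m) ℂ) (Z : Matrix m m ℂ) : Matrix m m ℂ :=
  (M.toBlocks₁₁ * Z + M.toBlocks₁₂) * (M.toBlocks₂₁ * Z + M.toBlocks₂₂)⁻¹

/-- Membership in the domain `H̃ₙ`: `i(Z* − Z)` positive definite. -/
def InDomain {m : Type*} [Fintype m] [DecidableEq m] (Z : Matrix m m ℂ) : Prop :=
  (Complex.I • (Zᴴ - Z)).PosDef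

/-- `u(Z₁,Z₂) = blockdiag(Z₁, −Z̄₂)`. -/
def uEmb (Z₁ : Matrix (Fin 2) (Fin 2) ℂ) (Z₂ : Matrix (Fin 1) (Fin 1) ℂ) :
    Matrix ρ ρ ℂ :=
  fromBlocks Z₁ 0 0 (-(Z₂.map (starRingEnd ℂ)))

-- helpers

lemma not_posDef_zero' {m : Type*} [Fintype m] [DecidableEq m] [Nonempty m] :
    ¬ (0 : Matrix m m ℂ).PosDef := by
  intro h
  have hx : (fun _ => 1 : m → ℂ) ≠ 0 := fun h' =>
    one_ne_zero (congrFun h' (Classical.arbitrary m))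
  have := h.dotProduct_mulVec_pos hx
  simp at this

lemma posDef_fromBlocks' {m n : Type*} [Fintype m] [Fintype n] [DecidableEq m] [DecidableEq n]
    {P : Matrix m m ℂ} {Q : Matrix n n ℂ} (hP : P.PosDef) (hQ : Q.PosDef) :
    (fromBlocks P 0 0 Q).PosDef := by
  refine Matrix.PosDef.of_dotProduct_mulVec_pos ?_ ?_
  · show _ = _
    rw [fromBlocks_conjTranspose]
    simp [hP.1.eq, hQ.1.eq]
  · intro x hx
    rw [fromBlocks_mulVec, dotProduct_block]
    simp only [Sum.elim_comp_inl, Sum.elim_comp_inr, Matrix.zero_mulVec, add_zero, zero_add]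
    have hsplit : x ∘ Sum.inl ≠ 0 ∨ x ∘ Sum.inr ≠ 0 := by
      by_contra h
      push_neg at h
      apply hx
      funext i
      cases i with
      | inl i => exact congrFun h.1 i
      | inr i => exact congrFun h.2 i
    have h1 := hP.posSemidef.dotProduct_mulVec_nonneg (x ∘ Sum.inl)
    have h2 := hQ.posSemidef.dotProduct_mulVec_nonneg (x ∘ Sum.inr)
    rcases hsplit with h | h
    · exact lt_of_lt_of_le (hP.dotProduct_mulVec_pos h) (le_add_of_le_of_nonneg le_rfl h2)
    · exact lt_of_lt_of_le (hQ.dotProduct_mulVec_pos h) (le_add_of_nonneg_of_le h1 le_rfl)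

lemma inv_entry_one' (Y : Matrix (Fin 1) (Fin 1) ℂ) : Y⁻¹ 0 0 = (Y 0 0)⁻¹ := by
  rw [Matrix.inv_def, Matrix.adjugate_fin_one, Matrix.det_fin_one]
  simp [Ring.inverse_eq_inv]

lemma isUnit_denom' {m : Type*} [Fintype m] [DecidableEq m] [Nonempty m]
    (g : Matrix (m ⊕ m) (m ⊕ m) ℂ) (Z : Matrix m m ℂ)
    (hact : act g (Complex.I • 1) = Z) (hZ : InDomain Z) :
    IsUnit (g.toBlocks₂₁ * (Complex.I • 1) + g.toBlocks₂₂) := by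
  by_contra h
  have hinv : (g.toBlocks₂₁ * (Complex.I • 1) + g.toBlocks₂₂)⁻¹ = 0 :=
    Matrix.nonsing_inv_apply_not_isUnit _ (by rwa [← Matrix.isUnit_iff_isUnit_det])
  have hZ0 : Z = 0 := by rw [← hact]; unfold act; rw [hinv, Matrix.mul_zero]
  subst hZ0
  apply not_posDef_zero' (m := m)
  simpa [InDomain] using hZ


local notation "σc" => (starRingEnd ℂ)

lemma scalar_v_ne (a b c d : ℂ)
    (e11 : -(σc c * a) + σc a * c = 0)
    (e12 : -(σc c * b) + σc a * d = 1)
    (e21 : -(σc d * a) + σc b * c = -1)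
    (e22 : -(σc d * b) + σc b * d = 0) :
    -(c * Complex.I) + d ≠ 0 := by
  intro hv
  have hv' := congrArg σc hv
  simp only [_root_.map_add, _root_.map_neg, _root_.map_mul, Complex.conj_I, _root_.map_zero, mul_neg] at hv'
  have h2 : (2:ℂ) = 0 := by
    linear_combination -e12 + e21 + Complex.I*e22 + Complex.I*e11
      + (σc a - Complex.I * σc b)*hv + (a + Complex.I*b)*hv'
      - (σc c * b + σc b * c) * Complex.I_sq
  norm_num at h2

lemma scalar_main (a b c d : ℂ)
    (e11 : -(σc c * a) + σc a * c = 0)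
    (e12 : -(σc c * b) + σc a * d = 1)
    (e22 : -(σc d * b) + σc b * d = 0)
    (hv : -(c * Complex.I) + d ≠ 0) (hu : c * Complex.I + d ≠ 0) :
    (a * Complex.I + -b) * (-(c * Complex.I) + d)⁻¹ =
      -((σc a * -Complex.I + σc b) * (σc c * -Complex.I + σc d)⁻¹) := by
  have hw : σc c * -Complex.I + σc d ≠ 0 := by
    intro h
    apply hu
    have := congrArg σc h
    simpa [mul_comm] using this
  have e12' := congrArg σc e12
  simp only [_root_.map_add, _root_.map_neg, _root_.map_mul, _root_.map_one,
    RingHomCompTriple.comp_apply, RingHom.id_apply, Complex.conj_conj] at e12'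
  have e22' := congrArg σc e22
  simp only [_root_.map_add, _root_.map_neg, _root_.map_mul, RingHomCompTriple.comp_apply,
    RingHom.id_apply, Complex.conj_conj, _root_.map_zero] at e22'
  field_simp
  rw [neg_div', div_eq_div_iff (by simpa [mul_comm] using hv) (by simpa [mul_neg, mul_comm] using hw)]
  linear_combination Complex.I*e12' - Complex.I*e12 + Complex.I^2*e11 - e22'

/-- `u : H̃₂ × H̃₁ → H̃₃` is well defined, and if `g₁(iI₂) = Z₁`, `g₂(i) = Z₂`
for `g₁ ∈ U(2,2)(ℝ)`, `g₂ ∈ U(1,1)(ℝ)`, then `ι(g₁,g₂)(iI₃) = u(Z₁,Z₂)`. -/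
theorem uEmb_wellDefined_and_equivariant
    (Z₁ : Matrix (Fin 2) (Fin 2) ℂ) (Z₂ : Matrix (Fin 1) (Fin 1) ℂ)
    (hZ₁ : InDomain Z₁) (hZ₂ : InDomain Z₂)
    (g₁ : Matrix (Fin 2 ⊕ Fin 2) (Fin 2 ⊕ Fin 2) ℂ)
    (g₂ : Matrix (Fin 1 ⊕ Fin 1) (Fin 1 ⊕ Fin 1) ℂ)
    (hg₁ : g₁ᴴ * (fromBlocks 0 1 (-1) 0) * g₁ = fromBlocks 0 1 (-1) 0)
    (hg₂ : g₂ᴴ * (fromBlocks 0 1 (-1) 0) * g₂ = fromBlocks 0 1 (-1) 0)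
    (hact₁ : act g₁ (Complex.I • 1) = Z₁)
    (hact₂ : act g₂ (Complex.I • 1) = Z₂) :
    InDomain (uEmb Z₁ Z₂) ∧ act (iota g₁ g₂) (Complex.I • 1) = uEmb Z₁ Z₂ := by

  have partA : InDomain (uEmb Z₁ Z₂) := by
    show (Complex.I • ((uEmb Z₁ Z₂)ᴴ - uEmb Z₁ Z₂)).PosDef
    have key : Complex.I • ((uEmb Z₁ Z₂)ᴴ - uEmb Z₁ Z₂) =
        fromBlocks (Complex.I • (Z₁ᴴ - Z₁)) 0 0 (Complex.I • (Z₂ᴴ - Z₂)) := by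
      ext i j
      rcases i with i | i <;> rcases j with j | j <;>
        simp [uEmb, fromBlocks_conjTranspose, fromBlocks, Matrix.conjTranspose_apply,
          Matrix.map_apply, Fin.eq_zero, mul_comm] <;> ring
    rw [key]
    exact posDef_fromBlocks' hZ₁ hZ₂
  refine ⟨partA, ?_⟩
  have e11 := congrFun (congrFun hg₂ (Sum.inl 0)) (Sum.inl 0)
  have e12 := congrFun (congrFun hg₂ (Sum.inl 0)) (Sum.inr 0)
  have e21 := congrFun (congrFun hg₂ (Sum.inr 0)) (Sum.inl 0)
  have e22 := congrFun (congrFun hg₂ (Sum.inr 0)) (Sum.inr 0)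
  simp only [Matrix.mul_apply, Fintype.sum_sum_type, Finset.univ_unique, Fin.default_eq_zero,
    Finset.sum_singleton, fromBlocks, Matrix.conjTranspose_apply, of_apply, Sum.elim_inl,
    Sum.elim_inr, Matrix.zero_apply, Matrix.one_apply_eq, Matrix.neg_apply, map_zero, zero_mul,
    mul_zero, zero_add, add_zero, mul_one, one_mul, map_neg, neg_mul, mul_neg,
    Matrix.one_apply, if_true, eq_self_iff_true, Complex.star_def] at e11 e12 e21 e22
  have hu : g₂ (Sum.inr 0) (Sum.inl 0) * Complex.I + g₂ (Sum.inr 0) (Sum.inr 0) ≠ 0 := by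
    have hM₂ := isUnit_denom' g₂ Z₂ hact₂ hZ₂
    rw [Matrix.isUnit_iff_isUnit_det, Matrix.det_fin_one] at hM₂
    have hentry : (g₂.toBlocks₂₁ * (Complex.I • 1) + g₂.toBlocks₂₂) 0 0 =
        g₂ (Sum.inr 0) (Sum.inl 0) * Complex.I + g₂ (Sum.inr 0) (Sum.inr 0) := by
      simp [Matrix.toBlocks₂₁, Matrix.toBlocks₂₂, Matrix.mul_apply, Matrix.add_apply,
        Matrix.smul_apply, Matrix.one_apply, Fin.sum_univ_one] <;> ring
    rw [hentry, isUnit_iff_ne_zero] at hM₂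
    exact hM₂
  have hv : -(g₂ (Sum.inr 0) (Sum.inl 0) * Complex.I) + g₂ (Sum.inr 0) (Sum.inr 0) ≠ 0 :=
    scalar_v_ne _ _ _ _ e11 e12 e21 e22
  have hM₁ := isUnit_denom' g₁ Z₁ hact₁ hZ₁
  have hM₂' : IsUnit ((-g₂.toBlocks₂₁) * (Complex.I • 1) + g₂.toBlocks₂₂) := by
    rw [Matrix.isUnit_iff_isUnit_det, Matrix.det_fin_one]
    have hentry : ((-g₂.toBlocks₂₁) * (Complex.I • 1) + g₂.toBlocks₂₂) 0 0
        = -(g₂ (Sum.inr 0) (Sum.inl 0) * Complex.I) + g₂ (Sum.inr 0) (Sum.inr 0) := by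
      simp [Matrix.toBlocks₂₁, Matrix.toBlocks₂₂, Matrix.mul_apply, Matrix.add_apply,
        Matrix.smul_apply, Matrix.one_apply, Fin.sum_univ_one] <;> ring
    rw [hentry]
    exact isUnit_iff_ne_zero.mpr hv
  have hZ2entry : Z₂ 0 0 = (g₂ (Sum.inl 0) (Sum.inl 0) * Complex.I + g₂ (Sum.inl 0) (Sum.inr 0)) *
      (g₂ (Sum.inr 0) (Sum.inl 0) * Complex.I + g₂ (Sum.inr 0) (Sum.inr 0))⁻¹ := by
    rw [← hact₂]
    show ((g₂.toBlocks₁₁ * (Complex.I • 1) + g₂.toBlocks₁₂) *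
        (g₂.toBlocks₂₁ * (Complex.I • 1) + g₂.toBlocks₂₂)⁻¹) 0 0 = _
    rw [Matrix.mul_apply, Fin.sum_univ_one, inv_entry_one']
    simp only [Matrix.toBlocks₁₁, Matrix.toBlocks₁₂, Matrix.toBlocks₂₁, Matrix.toBlocks₂₂,
      Matrix.mul_apply, Matrix.add_apply, Matrix.smul_apply, Matrix.one_apply, of_apply,
      Fin.sum_univ_one, smul_eq_mul, mul_one, if_true, eq_self_iff_true]
    try ring
  have hone : (Complex.I • (1 : Matrix ρ ρ ℂ)) =
      fromBlocks (Complex.I • 1) 0 0 (Complex.I • 1) := by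
    rw [← fromBlocks_one, fromBlocks_smul]
    simp
  show (((iota g₁ g₂).toBlocks₁₁ * (Complex.I • 1) + (iota g₁ g₂).toBlocks₁₂) *
      ((iota g₁ g₂).toBlocks₂₁ * (Complex.I • 1) + (iota g₁ g₂).toBlocks₂₂)⁻¹) = uEmb Z₁ Z₂
  have hb11 : (iota g₁ g₂).toBlocks₁₁ = fromBlocks g₁.toBlocks₁₁ 0 0 g₂.toBlocks₁₁ := by
    simp [iota]
  have hb12 : (iota g₁ g₂).toBlocks₁₂ = fromBlocks g₁.toBlocks₁₂ 0 0 (-g₂.toBlocks₁₂) := by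
    simp [iota]
  have hb21 : (iota g₁ g₂).toBlocks₂₁ = fromBlocks g₁.toBlocks₂₁ 0 0 (-g₂.toBlocks₂₁) := by
    simp [iota]
  have hb22 : (iota g₁ g₂).toBlocks₂₂ = fromBlocks g₁.toBlocks₂₂ 0 0 g₂.toBlocks₂₂ := by
    simp [iota]
  rw [hb11, hb12, hb21, hb22, hone, fromBlocks_multiply, fromBlocks_multiply,
    fromBlocks_add, fromBlocks_add]
  simp only [Matrix.zero_mul, Matrix.mul_zero, add_zero, zero_add]
  rw [Matrix.inv_fromBlocks_zero₂₁_of_isUnit_iff _ _ _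
    (iff_of_true hM₁ hM₂'), fromBlocks_multiply]
  simp only [Matrix.zero_mul, Matrix.mul_zero, add_zero, zero_add, neg_zero]
  unfold uEmb
  have hfirst : (g₁.toBlocks₁₁ * (Complex.I • 1) + g₁.toBlocks₁₂) *
      (g₁.toBlocks₂₁ * (Complex.I • 1) + g₁.toBlocks₂₂)⁻¹ = Z₁ := hact₁
  have hsecond : (g₂.toBlocks₁₁ * (Complex.I • 1) + -g₂.toBlocks₁₂) *
      ((-g₂.toBlocks₂₁) * (Complex.I • 1) + g₂.toBlocks₂₂)⁻¹ = -(Z₂.map (starRingEnd ℂ)) := by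
    ext i j
    rw [Fin.eq_zero i, Fin.eq_zero j]
    rw [Matrix.mul_apply, Fin.sum_univ_one, inv_entry_one']
    have h1 : (g₂.toBlocks₁₁ * (Complex.I • 1) + -g₂.toBlocks₁₂) 0 0 =
        g₂ (Sum.inl 0) (Sum.inl 0) * Complex.I + -g₂ (Sum.inl 0) (Sum.inr 0) := by
      simp [Matrix.toBlocks₁₁, Matrix.toBlocks₁₂, Matrix.mul_apply, Matrix.add_apply,
        Matrix.smul_apply, Matrix.one_apply, Fin.sum_univ_one] <;> ring
    have h2 : ((-g₂.toBlocks₂₁) * (Complex.I • 1) + g₂.toBlocks₂₂) 0 0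
        = -(g₂ (Sum.inr 0) (Sum.inl 0) * Complex.I) + g₂ (Sum.inr 0) (Sum.inr 0) := by
      simp [Matrix.toBlocks₂₁, Matrix.toBlocks₂₂, Matrix.mul_apply, Matrix.add_apply,
        Matrix.smul_apply, Matrix.one_apply, Fin.sum_univ_one] <;> ring
    rw [h1, h2]
    have hrhs : (-(Z₂.map (starRingEnd ℂ))) 0 0 = -((starRingEnd ℂ) (Z₂ 0 0)) := by
      simp [Matrix.map_apply]
    rw [hrhs, hZ2entry]
    rw [_root_.map_mul, map_inv₀, _root_.map_add, _root_.map_add, _root_.map_mul,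
      _root_.map_mul, Complex.conj_I]
    exact scalar_main _ _ _ _ e11 e12 e22 hv hu
  rw [hfirst, hsecond]

end
end
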